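/- (Entropy production in the vanishing-pressure limit.) Let u_l > u_r, ρ_l, ρ_r > 0, and for ε ∈ (0, η) let (u*_ε, ρ*_ε), s₁(ε), s₂(ε) be as in the two-shock Riemann solution (satisfying the two Rankine–Hugoniot equations with u_r < u*_ε < u_l, ρ*_ε > max(ρ_l, ρ_r)). With η_ε(u,ρ) = u²/2 + ε·e^ρ and q_ε(u,ρ) = u³/3 + ε·ρ·u·e^ρ, the total entropy-jump coefficient E(ε) = [ −s₁(ε)·(η_ε(u*_ε,ρ*_ε) − η_ε(u_l,ρ_l)) + q_ε(u*_ε,ρ*_ε) − q_ε(u_l,ρ_l) ] + [ −s₂(ε)·(η_ε(u_r,ρ_r) − η_ε(u*_ε,ρ*_ε)) + q_ε(u_r,ρ_r) − q_ε(u*_ε,ρ*_ε) ] satisfies lim_{ε→0} E(ε) = (u_l + u_r)/4·(u_l² − u_r²) + (u_r³ − u_l³)/3 = −(u_l − u_r)³/12, which is strictly negative since u_l > u_r. -/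

import Mathlib

open Real Filter Topology

/-- The pressure-like function `p(ρ) = ∫₀^ρ ξ·e^ξ dξ`. -/
noncomputable def p (ρ : ℝ) : ℝ := ∫ ξ in (0:ℝ)..ρ, ξ * Real.exp ξ

lemma p_eq (ρ : ℝ) : p ρ = (ρ - 1) * Real.exp ρ + 1 := by
  have h : ∀ ξ : ℝ, HasDerivAt (fun x => (x - 1) * Real.exp x) (ξ * Real.exp ξ) ξ := by
    intro ξ
    have := ((hasDerivAt_id ξ).sub_const 1).mul (Real.hasDerivAt_exp ξ)
    refine this.congr_deriv ?_
    simp only [id_eq]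
    ring
  have hint : IntervalIntegrable (fun ξ : ℝ => ξ * Real.exp ξ) MeasureTheory.volume 0 ρ :=
    (continuous_id.mul Real.continuous_exp).intervalIntegrable _ _
  unfold p
  rw [intervalIntegral.integral_eq_sub_of_hasDerivAt (fun ξ _ => h ξ) hint]
  simp [Real.exp_zero]

lemma p_nonneg {ρ : ℝ} (_hρ : 0 ≤ ρ) : 0 ≤ p ρ := by
  rw [p_eq]
  have hm : Real.exp (-ρ) * Real.exp ρ = 1 := by rw [← Real.exp_add]; simp
  nlinarith [Real.add_one_le_exp (-ρ), Real.exp_pos ρ, hm]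

lemma aux_ratio (c d : ℝ) : Tendsto (fun y : ℝ => (y + c) / (y + d)) atTop (𝓝 1) := by
  have h1 : Tendsto (fun y : ℝ => 1 + (c - d) * (y + d)⁻¹) atTop (𝓝 (1 + (c - d) * 0)) :=
    tendsto_const_nhds.add (tendsto_const_nhds.mul
      (tendsto_inv_atTop_zero.comp (tendsto_atTop_add_const_right _ d tendsto_id)))
  rw [mul_zero, add_zero] at h1
  refine Tendsto.congr' ?_ h1
  filter_upwards [eventually_gt_atTop (-d)] with y hy
  have h0 : y + d ≠ 0 := by linarith [neg_lt_iff_pos_add.mp hy]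
  field_simp
  ring

/-- Entropy production in the vanishing-pressure limit: the total entropy-jump
coefficient `E(ε)` for the entropy pair `η_ε(u,ρ) = u²/2 + ε e^ρ`,
`q_ε(u,ρ) = u³/3 + ε ρ u e^ρ` converges to
`(u_l+u_r)/4·(u_l² − u_r²) + (u_r³ − u_l³)/3 = −(u_l − u_r)³/12 < 0`. -/
theorem stmt14 (ul ur ρl ρr η : ℝ) (hu : ur < ul) (hρl : 0 < ρl) (hρr : 0 < ρr)
    (hη : 0 < η) (us ρs s1 s2 : ℝ → ℝ)
    (hmem : ∀ ε ∈ Set.Ioo (0:ℝ) η, ur < us ε ∧ us ε < ul ∧ max ρl ρr < ρs ε)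
    (heq1 : ∀ ε ∈ Set.Ioo (0:ℝ) η,
      (us ε - ul) ^ 2 * (ρs ε + ρl) / 2 = ε * (ρs ε - ρl) * (p (ρs ε) - p ρl))
    (heq2 : ∀ ε ∈ Set.Ioo (0:ℝ) η,
      (us ε - ur) ^ 2 * (ρs ε + ρr) / 2 = ε * (ρs ε - ρr) * (p (ρs ε) - p ρr))
    (hs1 : ∀ ε, s1 ε = (us ε + ul) / 2 + ε * (p (ρs ε) - p ρl) / (us ε - ul))
    (hs2 : ∀ ε, s2 ε = (us ε + ur) / 2 + ε * (p (ρs ε) - p ρr) / (us ε - ur)) :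
    let L : ℝ := (ul + ur) / 4 * (ul ^ 2 - ur ^ 2) + (ur ^ 3 - ul ^ 3) / 3
    Tendsto (fun ε =>
        (-(s1 ε) * ((us ε ^ 2 / 2 + ε * Real.exp (ρs ε)) - (ul ^ 2 / 2 + ε * Real.exp ρl)) +
          (us ε ^ 3 / 3 + ε * ρs ε * us ε * Real.exp (ρs ε)) -
          (ul ^ 3 / 3 + ε * ρl * ul * Real.exp ρl)) +
        (-(s2 ε) * ((ur ^ 2 / 2 + ε * Real.exp ρr) - (us ε ^ 2 / 2 + ε * Real.exp (ρs ε))) +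
          (ur ^ 3 / 3 + ε * ρr * ur * Real.exp ρr) -
          (us ε ^ 3 / 3 + ε * ρs ε * us ε * Real.exp (ρs ε))))
      (𝓝[>] (0:ℝ)) (𝓝 L) ∧ L = -(ul - ur) ^ 3 / 12 ∧ L < 0 := by
  intro L
  set l : Filter ℝ := 𝓝[>] (0:ℝ) with hl
  obtain ⟨c, hc⟩ : ∃ c : ℝ, c = ul - ur := ⟨ul - ur, rfl⟩
  have hcpos : 0 < c := by rw [hc]; linarith
  have hL2 : L = -(ul - ur) ^ 3 / 12 := by show _ = _; ring
  have hL3 : L < 0 := by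
    rw [hL2]
    have : 0 < (ul - ur) ^ 3 := pow_pos (sub_pos.mpr hu) 3
    linarith
  refine ⟨?_, hL2, hL3⟩
  have hIoo : ∀ᶠ ε in l, ε ∈ Set.Ioo (0:ℝ) η :=
    Ioo_mem_nhdsGT_of_mem ⟨le_refl 0, hη⟩
  have hord : ∀ᶠ ε in l, 0 < ε ∧ ε < η ∧ ur < us ε ∧ us ε < ul ∧ ρl < ρs ε ∧ ρr < ρs ε := by
    filter_upwards [hIoo] with ε hε
    obtain ⟨h1, h2, h3⟩ := hmem ε hε
    exact ⟨hε.1, hε.2, h1, h2, lt_of_le_of_lt (le_max_left _ _) h3,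
      lt_of_le_of_lt (le_max_right _ _) h3⟩
  have hE1 : ∀ᶠ ε in l, (us ε - ul) ^ 2 * (ρs ε + ρl) / 2
      = ε * (ρs ε - ρl) * (p (ρs ε) - p ρl) := by
    filter_upwards [hIoo] with ε hε; exact heq1 ε hε
  have hE2 : ∀ᶠ ε in l, (us ε - ur) ^ 2 * (ρs ε + ρr) / 2
      = ε * (ρs ε - ρr) * (p (ρs ε) - p ρr) := by
    filter_upwards [hIoo] with ε hε; exact heq2 ε hε
  -- Step A : ρs → ∞
  have hρtop : Tendsto ρs l atTop := by
    have key : ∀ᶠ ε in l, Real.log (c ^ 2 / (16 * ε)) / 2 ≤ ρs ε := by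
      filter_upwards [hord, hE1, hE2] with ε hε h1 h2
      obtain ⟨hε0, hεη, hba, hab, hl1, hr1⟩ := hε
      have hρs0 : 0 < ρs ε := lt_trans hρl hl1
      have hpl0 : 0 ≤ p ρl := p_nonneg hρl.le
      have hpr0 : 0 ≤ p ρr := p_nonneg hρr.le
      have hP0 : 0 ≤ p (ρs ε) := p_nonneg hρs0.le
      -- P - p ρl > 0 etc from the equations
      have hneg : us ε - ul < 0 := by linarith
      have hsq1 : 0 < (us ε - ul) ^ 2 := by rw [sq]; exact mul_pos_of_neg_of_neg hneg hneg
      have hsq2 : 0 < (us ε - ur) ^ 2 := pow_pos (by linarith) 2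
      have hd1 : 0 < p (ρs ε) - p ρl := by
        by_contra h
        push_neg at h
        have hprod : ε * (ρs ε - ρl) * (p (ρs ε) - p ρl) ≤ 0 :=
          mul_nonpos_of_nonneg_of_nonpos (mul_nonneg hε0.le (by linarith)) h
        linarith only [h1, hprod, mul_pos hsq1 (by linarith : (0:ℝ) < ρs ε + ρl)]
      have hd2 : 0 < p (ρs ε) - p ρr := by
        by_contra h
        push_neg at h
        have hprod : ε * (ρs ε - ρr) * (p (ρs ε) - p ρr) ≤ 0 :=
          mul_nonpos_of_nonneg_of_nonpos (mul_nonneg hε0.le (by linarith)) h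
        linarith only [h2, hprod, mul_pos hsq2 (by linarith : (0:ℝ) < ρs ε + ρr)]
      -- c²/8 ≤ ε P
      have m1 : (ρs ε - ρl) * (p (ρs ε) - p ρl) ≤ ρs ε * p (ρs ε) :=
        mul_le_mul (by linarith) (by linarith) hd1.le hρs0.le
      have m2 : (ρs ε - ρr) * (p (ρs ε) - p ρr) ≤ ρs ε * p (ρs ε) :=
        mul_le_mul (by linarith) (by linarith) hd2.le hρs0.le
      have e1 : (us ε - ul) ^ 2 * ρs ε / 2 ≤ ε * (ρs ε * p (ρs ε)) := by
        have h1' : (us ε - ul) ^ 2 * ρs ε ≤ (us ε - ul) ^ 2 * (ρs ε + ρl) :=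
          mul_le_mul_of_nonneg_left (by linarith) hsq1.le
        have h1'' := mul_le_mul_of_nonneg_left m1 hε0.le
        linarith only [h1, h1', h1'']
      have e2 : (us ε - ur) ^ 2 * ρs ε / 2 ≤ ε * (ρs ε * p (ρs ε)) := by
        have h2' : (us ε - ur) ^ 2 * ρs ε ≤ (us ε - ur) ^ 2 * (ρs ε + ρr) :=
          mul_le_mul_of_nonneg_left (by linarith) hsq2.le
        have h2'' := mul_le_mul_of_nonneg_left m2 hε0.le
        linarith only [h2, h2', h2'']
      have e3 : c ^ 2 / 4 * ρs ε ≤ 2 * (ε * (ρs ε * p (ρs ε))) := by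
        have hsum : c ^ 2 / 2 ≤ (us ε - ul) ^ 2 + (us ε - ur) ^ 2 := by
          have := sq_nonneg ((ul - us ε) - (us ε - ur))
          rw [hc]; linarith only [this]
        have := mul_le_mul_of_nonneg_right hsum hρs0.le
        linarith only [this, e1, e2]
      have hkey : c ^ 2 / 8 ≤ ε * p (ρs ε) := by
        by_contra hcon
        push_neg at hcon
        have := mul_lt_mul_of_pos_left hcon hρs0
        linarith only [this, e3]
      -- ε P ≤ 2 ε e^{2 ρs}
      have hup : p (ρs ε) ≤ 2 * Real.exp (2 * ρs ε) := by
        rw [p_eq]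
        have h1' : ρs ε ≤ Real.exp (ρs ε) := (Real.add_one_le_exp (ρs ε)).trans' (by linarith)
        have h2' : Real.exp (ρs ε) * Real.exp (ρs ε) = Real.exp (2 * ρs ε) := by
          rw [← Real.exp_add]; ring_nf
        have h3' : (1:ℝ) ≤ Real.exp (2 * ρs ε) := Real.one_le_exp (by linarith)
        have a1 : (ρs ε - 1) * Real.exp (ρs ε) ≤ ρs ε * Real.exp (ρs ε) :=
          mul_le_mul_of_nonneg_right (by linarith) (Real.exp_pos _).le
        have a2 : ρs ε * Real.exp (ρs ε) ≤ Real.exp (ρs ε) * Real.exp (ρs ε) :=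
          mul_le_mul_of_nonneg_right h1' (Real.exp_pos _).le
        linarith
      have hloge : c ^ 2 / (16 * ε) ≤ Real.exp (2 * ρs ε) := by
        rw [div_le_iff₀ (by positivity)]
        have := mul_le_mul_of_nonneg_left hup hε0.le
        linarith only [this, hkey]
      have := Real.log_le_log (by positivity) hloge
      rw [Real.log_exp] at this
      linarith
    refine tendsto_atTop_mono' l key ?_
    apply Tendsto.atTop_div_const two_pos
    apply Real.tendsto_log_atTop.comp
    have h16 : Tendsto (fun ε : ℝ => (c ^ 2 / 16) * ε⁻¹) l atTop :=
      Tendsto.const_mul_atTop (by positivity) tendsto_inv_nhdsGT_zero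
    refine h16.congr ?_
    intro x
    ring
  -- Step B : p (ρs ε) → ∞
  have hPtop : Tendsto (fun ε => p (ρs ε)) l atTop := by
    refine tendsto_atTop_mono' l ?_ hρtop
    filter_upwards [hρtop.eventually_ge_atTop 1] with ε h1
    rw [p_eq]
    nlinarith [Real.one_le_exp (by linarith : (0:ℝ) ≤ ρs ε)]
  -- ratio limits
  have hRl : Tendsto (fun ε => (ρs ε + ρl) / (ρs ε - ρl)) l (𝓝 1) := by
    have := (aux_ratio ρl (-ρl)).comp hρtop
    simpa [Function.comp_def, sub_eq_add_neg] using this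
  have hRl' : Tendsto (fun ε => (ρs ε - ρl) / (ρs ε + ρl)) l (𝓝 1) := by
    have := (aux_ratio (-ρl) ρl).comp hρtop
    simpa [Function.comp_def, sub_eq_add_neg] using this
  have hRr : Tendsto (fun ε => (ρs ε + ρr) / (ρs ε - ρr)) l (𝓝 1) := by
    have := (aux_ratio ρr (-ρr)).comp hρtop
    simpa [Function.comp_def, sub_eq_add_neg] using this
  have hQ : Tendsto (fun ε => (p (ρs ε) - p ρl) / (p (ρs ε) - p ρr)) l (𝓝 1) := by
    have := (aux_ratio (-p ρl) (-p ρr)).comp hPtop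
    simpa [Function.comp_def, sub_eq_add_neg] using this
  -- Step D : t := (ul - us)/(us - ur) → 1
  have hR : Tendsto (fun ε => (p (ρs ε) - p ρl) / (p (ρs ε) - p ρr)
      * ((ρs ε - ρl) / (ρs ε + ρl)) * ((ρs ε + ρr) / (ρs ε - ρr))) l (𝓝 1) := by
    have := (hQ.mul hRl').mul hRr
    simpa using this
  have hPbig : ∀ᶠ ε in l, p ρl < p (ρs ε) ∧ p ρr < p (ρs ε) := by
    filter_upwards [hPtop.eventually_gt_atTop (p ρl), hPtop.eventually_gt_atTop (p ρr)]
      with ε h1 h2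
    exact ⟨h1, h2⟩
  have heqt : ∀ᶠ ε in l, ((ul - us ε) / (us ε - ur)) ^ 2
      = (p (ρs ε) - p ρl) / (p (ρs ε) - p ρr)
        * ((ρs ε - ρl) / (ρs ε + ρl)) * ((ρs ε + ρr) / (ρs ε - ρr)) := by
    filter_upwards [hord, hE1, hE2, hPbig] with ε hε h1 h2 hP
    obtain ⟨hε0, hεη, hba, hab, hl1, hr1⟩ := hε
    have n1 : us ε - ur ≠ 0 := by linarith
    have n2 : p (ρs ε) - p ρr ≠ 0 := by linarith [hP.2]
    have n3 : ρs ε + ρl ≠ 0 := by intro h; linarith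
    have n4 : ρs ε - ρr ≠ 0 := by linarith
    have n6 : ρs ε + ρr ≠ 0 := by intro h; linarith
    have key : (ul - us ε) ^ 2 * ((p (ρs ε) - p ρr) * ((ρs ε + ρl) * (ρs ε - ρr)))
        = (us ε - ur) ^ 2 * ((p (ρs ε) - p ρl) * ((ρs ε - ρl) * (ρs ε + ρr))) := by
      linear_combination (2 * (ρs ε - ρr) * (p (ρs ε) - p ρr)) * h1
        - (2 * (ρs ε - ρl) * (p (ρs ε) - p ρl)) * h2
    rw [div_pow, show (p (ρs ε) - p ρl) / (p (ρs ε) - p ρr)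
          * ((ρs ε - ρl) / (ρs ε + ρl)) * ((ρs ε + ρr) / (ρs ε - ρr))
        = (p (ρs ε) - p ρl) * ((ρs ε - ρl) * (ρs ε + ρr))
          / ((p (ρs ε) - p ρr) * ((ρs ε + ρl) * (ρs ε - ρr))) by
        rw [div_mul_div_comm, div_mul_div_comm]; ring,
      div_eq_div_iff (pow_ne_zero 2 n1) (by exact mul_ne_zero n2 (mul_ne_zero n3 n4))]
    linear_combination key
  have ht : Tendsto (fun ε => (ul - us ε) / (us ε - ur)) l (𝓝 1) := by
    have hsq : Tendsto (fun ε => Real.sqrt ((p (ρs ε) - p ρl) / (p (ρs ε) - p ρr)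
        * ((ρs ε - ρl) / (ρs ε + ρl)) * ((ρs ε + ρr) / (ρs ε - ρr)))) l (𝓝 1) := by
      have := (Real.continuous_sqrt.tendsto 1).comp hR
      simpa [Function.comp_def] using this
    refine Tendsto.congr' ?_ hsq
    filter_upwards [hord, heqt] with ε hε he
    obtain ⟨hε0, hεη, hba, hab, hl1, hr1⟩ := hε
    rw [← he, Real.sqrt_sq (div_nonneg (by linarith) (by linarith))]
  -- us → σ
  have hus : Tendsto us l (𝓝 ((ul + ur) / 2)) := by
    have h1t : Tendsto (fun ε => ur + c / (1 + (ul - us ε) / (us ε - ur))) l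
        (𝓝 (ur + c / (1 + 1))) :=
      tendsto_const_nhds.add (tendsto_const_nhds.div
        (tendsto_const_nhds.add ht) (by norm_num))
    have hval : ur + c / (1 + 1) = (ul + ur) / 2 := by rw [hc]; ring
    rw [hval] at h1t
    refine Tendsto.congr' ?_ h1t
    filter_upwards [hord] with ε hε
    obtain ⟨hε0, hεη, hba, hab, hl1, hr1⟩ := hε
    have n1 : us ε - ur ≠ 0 := by linarith
    have h1 : 1 + (ul - us ε) / (us ε - ur) = c / (us ε - ur) := by
      field_simp
      rw [hc]; ring
    rw [h1, div_div_eq_mul_div, mul_comm, mul_div_assoc, div_self (ne_of_gt hcpos), mul_one]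
    ring
  -- s1 → σ
  have hs1t : Tendsto s1 l (𝓝 ((ul + ur) / 2)) := by
    have hbase : Tendsto (fun ε => (us ε + ul) / 2
        + (us ε - ul) * ((ρs ε + ρl) / (ρs ε - ρl)) / 2) l
        (𝓝 (((ul + ur) / 2 + ul) / 2 + ((ul + ur) / 2 - ul) * 1 / 2)) :=
      ((hus.add_const ul).div_const 2).add
        (((hus.sub_const ul).mul hRl).div_const 2)
    rw [show ((ul + ur) / 2 + ul) / 2 + ((ul + ur) / 2 - ul) * 1 / 2 = (ul + ur) / 2 by ring]
      at hbase
    refine Tendsto.congr' ?_ hbase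
    filter_upwards [hord, hE1] with ε hε h1
    obtain ⟨hε0, hεη, hba, hab, hl1, hr1⟩ := hε
    have n1 : us ε - ul ≠ 0 := by intro h; linarith
    have n5 : ρs ε - ρl ≠ 0 := by intro h; linarith
    rw [hs1 ε]
    congr 1
    rw [mul_div_assoc', div_div, div_eq_div_iff (mul_ne_zero n5 two_ne_zero) n1]
    linear_combination 2 * h1
  -- s2 → σ
  have hs2t : Tendsto s2 l (𝓝 ((ul + ur) / 2)) := by
    have hbase : Tendsto (fun ε => (us ε + ur) / 2
        + (us ε - ur) * ((ρs ε + ρr) / (ρs ε - ρr)) / 2) l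
        (𝓝 (((ul + ur) / 2 + ur) / 2 + ((ul + ur) / 2 - ur) * 1 / 2)) :=
      ((hus.add_const ur).div_const 2).add
        (((hus.sub_const ur).mul hRr).div_const 2)
    rw [show ((ul + ur) / 2 + ur) / 2 + ((ul + ur) / 2 - ur) * 1 / 2 = (ul + ur) / 2 by ring]
      at hbase
    refine Tendsto.congr' ?_ hbase
    filter_upwards [hord, hE2] with ε hε h2
    obtain ⟨hε0, hεη, hba, hab, hl1, hr1⟩ := hε
    have n1 : us ε - ur ≠ 0 := by intro h; linarith
    have n5 : ρs ε - ρr ≠ 0 := by intro h; linarith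
    rw [hs2 ε]
    congr 1
    rw [mul_div_assoc', div_div, div_eq_div_iff (mul_ne_zero n5 two_ne_zero) n1]
    linear_combination 2 * h2
  -- ε e^{ρs} → 0
  have hX : Tendsto (fun ε => ε * Real.exp (ρs ε)) l (𝓝 0) := by
    have hub : Tendsto (fun ε => (2 * (c ^ 2 + η * p ρl)) * (ρs ε)⁻¹) l (𝓝 0) := by
      have := (tendsto_inv_atTop_zero.comp hρtop).const_mul (2 * (c ^ 2 + η * p ρl))
      simpa using this
    have hRl2 : ∀ᶠ ε in l, (ρs ε + ρl) / (ρs ε - ρl) < 2 :=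
      hRl.eventually (eventually_lt_nhds (by norm_num : (1:ℝ) < 2))
    refine tendsto_of_tendsto_of_tendsto_of_le_of_le' tendsto_const_nhds hub ?_ ?_
    · filter_upwards [hord] with ε hε
      exact mul_nonneg hε.1.le (Real.exp_pos _).le
    · filter_upwards [hord, hE1, hRl2, hρtop.eventually_ge_atTop 2] with ε hε h1 hr2 hρ2
      obtain ⟨hε0, hεη, hba, hab, hl1, hr1⟩ := hε
      have hρs0 : 0 < ρs ε := lt_trans hρl hl1
      have hpl0 : 0 ≤ p ρl := p_nonneg hρl.le
      have n5 : ρs ε - ρl ≠ 0 := by intro h; linarith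
      -- ε (P − p ρl) = (us−ul)² (ρs+ρl)/(ρs−ρl) / 2
      have hA : ε * (p (ρs ε) - p ρl)
          = (us ε - ul) ^ 2 * ((ρs ε + ρl) / (ρs ε - ρl)) / 2 := by
        rw [mul_div_assoc', div_div, eq_div_iff (mul_ne_zero n5 two_ne_zero)]
        linear_combination (-2) * h1
      have habs : (us ε - ul) ^ 2 ≤ c ^ 2 := by
        rw [hc]
        exact sq_le_sq' (by linarith) (by linarith)
      have hrpos : 0 < (ρs ε + ρl) / (ρs ε - ρl) :=
        div_pos (by linarith) (by linarith)
      have hP2 : ε * p (ρs ε) ≤ c ^ 2 + η * p ρl := by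
        have h3 : (us ε - ul) ^ 2 * ((ρs ε + ρl) / (ρs ε - ρl)) / 2 ≤ c ^ 2 * 2 / 2 := by
          have := mul_le_mul habs hr2.le hrpos.le (by positivity : (0:ℝ) ≤ c ^ 2)
          linarith only [this]
        have h4 : ε * p ρl ≤ η * p ρl :=
          mul_le_mul_of_nonneg_right hεη.le hpl0
        have h5 := hA
        linarith only [h3, h4, h5]
      have hP1 : ρs ε * Real.exp (ρs ε) ≤ 2 * p (ρs ε) := by
        rw [p_eq]
        have := mul_le_mul_of_nonneg_right (by linarith : ρs ε ≤ 2 * (ρs ε - 1))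
          (Real.exp_pos (ρs ε)).le
        linarith only [this, Real.exp_pos (ρs ε)]
      rw [← div_eq_mul_inv, le_div_iff₀ hρs0]
      have h6 := mul_le_mul_of_nonneg_left hP1 hε0.le
      have h7 : ε * (2 * p (ρs ε)) ≤ 2 * (c ^ 2 + η * p ρl) := by linarith only [hP2]
      calc ε * Real.exp (ρs ε) * ρs ε = ε * (ρs ε * Real.exp (ρs ε)) := by ring
        _ ≤ ε * (2 * p (ρs ε)) := h6
        _ ≤ 2 * (c ^ 2 + η * p ρl) := h7
  have hεt : Tendsto (fun ε : ℝ => ε) l (𝓝 0) :=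
    (continuous_id.tendsto 0).mono_left nhdsWithin_le_nhds
  -- final assembly
  have hG : Tendsto (fun q : ℝ × ℝ × ℝ × ℝ × ℝ =>
      -q.1 * ((q.2.2.1 ^ 2 / 2 + q.2.2.2.1) - (ul ^ 2 / 2 + q.2.2.2.2 * Real.exp ρl))
        + q.2.2.1 ^ 3 / 3 - (ul ^ 3 / 3 + q.2.2.2.2 * ρl * ul * Real.exp ρl)
        + (-q.2.1 * ((ur ^ 2 / 2 + q.2.2.2.2 * Real.exp ρr) - (q.2.2.1 ^ 2 / 2 + q.2.2.2.1))
          + (ur ^ 3 / 3 + q.2.2.2.2 * ρr * ur * Real.exp ρr) - q.2.2.1 ^ 3 / 3))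
      (𝓝 ((ul + ur) / 2, (ul + ur) / 2, (ul + ur) / 2, 0, 0)) (𝓝 L) := by
    have hcont : Continuous (fun q : ℝ × ℝ × ℝ × ℝ × ℝ =>
        -q.1 * ((q.2.2.1 ^ 2 / 2 + q.2.2.2.1) - (ul ^ 2 / 2 + q.2.2.2.2 * Real.exp ρl))
        + q.2.2.1 ^ 3 / 3 - (ul ^ 3 / 3 + q.2.2.2.2 * ρl * ul * Real.exp ρl)
        + (-q.2.1 * ((ur ^ 2 / 2 + q.2.2.2.2 * Real.exp ρr) - (q.2.2.1 ^ 2 / 2 + q.2.2.2.1))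
          + (ur ^ 3 / 3 + q.2.2.2.2 * ρr * ur * Real.exp ρr) - q.2.2.1 ^ 3 / 3)) := by
      fun_prop
    have := hcont.tendsto ((ul + ur) / 2, (ul + ur) / 2, (ul + ur) / 2, (0:ℝ), (0:ℝ))
    convert this using 2
    show L = _
    simp only []
    ring
  have hprod : Tendsto (fun ε => (s1 ε, s2 ε, us ε, ε * Real.exp (ρs ε), ε)) l
      (𝓝 ((ul + ur) / 2, (ul + ur) / 2, (ul + ur) / 2, 0, 0)) :=
    hs1t.prodMk_nhds (hs2t.prodMk_nhds (hus.prodMk_nhds (hX.prodMk_nhds hεt)))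
  have hfin := hG.comp hprod
  refine Tendsto.congr ?_ hfin
  intro ε
  simp only [Function.comp]
  ring
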